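/- Assume M(x) = \sum_{p \le x} (\log p)/p satisfies M(x) = \log x + O(1). Then there exists C > 0 such that S(x) = \sum_{p \le x} \sqrt{(\log p)/p} \le C \sqrt{x/\log x} for all sufficiently large x. -/

import Mathlib

open Filter

noncomputable def primesUpTo (x : ℝ) : Finset ℕ :=
  (Finset.range (⌊x⌋₊ + 1)).filter Nat.Prime

noncomputable def S (x : ℝ) : ℝ := ∑ p ∈ primesUpTo x, Real.sqrt (Real.log p / p)

noncomputable def M (x : ℝ) : ℝ := ∑ p ∈ primesUpTo x, Real.log p / p

lemma mem_primesUpTo {p : ℕ} {x : ℝ} (hx : 0 ≤ x) :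
    p ∈ primesUpTo x ↔ (p : ℝ) ≤ x ∧ p.Prime := by
  simp [primesUpTo, Finset.mem_filter, Finset.mem_range, Nat.lt_succ_iff, Nat.le_floor_iff hx]

lemma primesUpTo_subset {a b : ℝ} (h : a ≤ b) : primesUpTo a ⊆ primesUpTo b := by
  apply Finset.filter_subset_filter
  rw [Finset.range_subset]
  intro y hy
  have := Nat.floor_mono h
  rw [Finset.mem_range]
  omega

lemma term_nonneg {p : ℕ} (hp : p.Prime) : 0 ≤ Real.log p / p :=
  div_nonneg (Real.log_natCast_nonneg p) (Nat.cast_nonneg p)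

lemma sqrt_pow_nonneg {a : ℝ} (ha : 0 ≤ a) (k : ℕ) :
    Real.sqrt (a ^ k) = (Real.sqrt a) ^ k := by
  induction k with
  | zero => simp
  | succ n ih => rw [pow_succ, pow_succ, Real.sqrt_mul (pow_nonneg ha n), ih]

lemma S_sub_le {a b c : ℝ} (h0 : 0 ≤ b) (hab : b ≤ a) (hc : 0 ≤ c)
    (hpt : ∀ p : ℕ, p.Prime → b < (p : ℝ) → (p : ℝ) ≤ a →
      Real.sqrt ((p : ℝ) / Real.log p) ≤ c) :
    S a - S b ≤ c * (M a - M b) := by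
  have hsub := primesUpTo_subset hab
  rw [S, S, ← Finset.sum_sdiff_eq_sub hsub, M, M, ← Finset.sum_sdiff_eq_sub hsub,
    Finset.mul_sum]
  apply Finset.sum_le_sum
  intro p hp
  obtain ⟨hpA, hpB⟩ := Finset.mem_sdiff.1 hp
  rw [mem_primesUpTo (h0.trans hab)] at hpA
  obtain ⟨hpa, hprime⟩ := hpA
  have hpb : b < (p : ℝ) := by
    by_contra hle
    exact hpB ((mem_primesUpTo h0).2 ⟨not_lt.mp hle, hprime⟩)
  have hp2 : (2 : ℝ) ≤ (p : ℝ) := by exact_mod_cast hprime.two_le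
  have hlogp : 0 < Real.log p := Real.log_pos (by linarith)
  have hppos : (0 : ℝ) < p := by linarith
  have hq : 0 < Real.log p / p := div_pos hlogp hppos
  have key : Real.sqrt (Real.log p / p)
      = (Real.log p / p) * Real.sqrt ((p : ℝ) / Real.log p) := by
    rw [show (p : ℝ) / Real.log p = (Real.log p / p)⁻¹ by rw [inv_div],
      Real.sqrt_inv, ← div_eq_mul_inv, Real.div_sqrt]
  rw [key, mul_comm c _]
  exact mul_le_mul_of_nonneg_left (hpt p hprime hpb hpa) hq.le

lemma geo_bound (K : ℕ) : ∑ k ∈ Finset.range K, (Real.sqrt (1/2)) ^ k ≤ 4 := by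
  have hr : Real.sqrt (1/2) ≤ 3/4 := by
    rw [show (3/4 : ℝ) = Real.sqrt ((3/4)^2) by rw [Real.sqrt_sq]; norm_num]
    exact Real.sqrt_le_sqrt (by norm_num)
  have hr0 : 0 ≤ Real.sqrt (1/2) := Real.sqrt_nonneg _
  calc ∑ k ∈ Finset.range K, (Real.sqrt (1/2)) ^ k
      ≤ ∑ k ∈ Finset.range K, ((3:ℝ)/4) ^ k :=
        Finset.sum_le_sum fun k _ => pow_le_pow_left₀ hr0 hr k
    _ ≤ 4 := by
        rw [geom_sum_eq (by norm_num : (3/4 : ℝ) ≠ 1) K]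
        have h1 : (0:ℝ) ≤ (3/4 : ℝ) ^ K := by positivity
        have h2 : ((3:ℝ)/4) ^ K ≤ 1 := pow_le_one₀ (by norm_num) (by norm_num)
        rw [div_le_iff_of_neg (by norm_num : (3/4 : ℝ) - 1 < 0)]
        linarith

theorem stmt_8 (hM : (fun x => M x - Real.log x) =O[atTop] (fun _ => (1 : ℝ))) :
    ∃ C : ℝ, 0 < C ∧ ∀ᶠ x : ℝ in atTop, S x ≤ C * Real.sqrt (x / Real.log x) := by
  obtain ⟨c, hc⟩ := Asymptotics.isBigO_iff.mp hM
  set B : ℝ := max c 1 with hBdef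
  have hB1 : (1 : ℝ) ≤ B := le_max_right _ _
  have hB : ∀ᶠ t : ℝ in atTop, |M t - Real.log t| ≤ B := by
    filter_upwards [hc] with t ht
    calc |M t - Real.log t| ≤ c * ‖(1:ℝ)‖ := ht
      _ = c := by simp
      _ ≤ B := le_max_left _ _
  obtain ⟨x₀', hx₀'⟩ := eventually_atTop.mp hB
  set x₀ : ℝ := max x₀' 2 with hx₀def
  have hx₀ : ∀ t : ℝ, x₀ ≤ t → |M t - Real.log t| ≤ B :=
    fun t ht => hx₀' t ((le_max_left _ _).trans ht)
  have hx₀2 : (2:ℝ) ≤ x₀ := le_max_right _ _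
  have hlog2 : (0:ℝ) < Real.log 2 := Real.log_pos one_lt_two
  refine ⟨8 * (Real.log 2 + 2 * B) + 1, by nlinarith, ?_⟩
  have hlittle : ∀ᶠ x : ℝ in atTop, ‖Real.log x‖ ≤ (1/9) * ‖x ^ (1/2 : ℝ)‖ :=
    ((isLittleO_log_rpow_atTop (by norm_num : (0:ℝ) < 1/2))).bound (by norm_num)
  filter_upwards [eventually_ge_atTop (16:ℝ), eventually_ge_atTop (x₀^4), hlittle]
    with x hx16 hxx₀ hxlog
  -- basic facts
  have hx1 : (1:ℝ) < x := by linarith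
  have hxpos : (0:ℝ) < x := by linarith
  have hLpos : (0:ℝ) < Real.log x := Real.log_pos hx1
  have hx34pos : (0:ℝ) < x ^ (3/4 : ℝ) := Real.rpow_pos_of_pos hxpos _
  have hx14pos : (0:ℝ) < x ^ (1/4 : ℝ) := Real.rpow_pos_of_pos hxpos _
  have hx12pos : (0:ℝ) < x ^ (1/2 : ℝ) := Real.rpow_pos_of_pos hxpos _
  have h9log : 9 * Real.log x ≤ x ^ (1/2 : ℝ) := by
    rw [Real.norm_eq_abs, Real.norm_eq_abs, abs_of_pos hLpos, abs_of_pos hx12pos] at hxlog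
    linarith
  have hx14_1 : (1:ℝ) ≤ x ^ (1/4 : ℝ) := Real.one_le_rpow hx1.le (by norm_num)
  have hx34_1 : (1:ℝ) ≤ x ^ (3/4 : ℝ) := Real.one_le_rpow hx1.le (by norm_num)
  -- x₀ ≤ x^{1/4}
  have hx₀le : x₀ ≤ x ^ (1/4 : ℝ) := by
    have h0 : (0:ℝ) ≤ x₀ := by linarith
    calc x₀ = (x₀ ^ (4:ℕ)) ^ ((1:ℝ)/4) := by
          rw [← Real.rpow_natCast x₀ 4, ← Real.rpow_mul h0]
          norm_num
      _ ≤ x ^ ((1:ℝ)/4) :=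
          Real.rpow_le_rpow (by positivity) hxx₀ (by norm_num)
  -- choice of K
  set K : ℕ := Nat.log 2 ⌊x ^ (3/4 : ℝ)⌋₊ with hKdef
  have hfl1 : 1 ≤ ⌊x ^ (3/4 : ℝ)⌋₊ := (Nat.one_le_floor_iff _).mpr hx34_1
  have h2K : ((2:ℝ)) ^ K ≤ x ^ (3/4 : ℝ) := by
    calc ((2:ℝ)) ^ K = ((2 ^ K : ℕ) : ℝ) := by push_cast; ring
      _ ≤ (⌊x ^ (3/4 : ℝ)⌋₊ : ℝ) := by
          exact_mod_cast Nat.pow_log_le_self 2 (by omega)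
      _ ≤ x ^ (3/4 : ℝ) := Nat.floor_le (by positivity)
  have h2K' : x ^ (3/4 : ℝ) < (2:ℝ) ^ (K + 1) := by
    calc x ^ (3/4 : ℝ) < (⌊x ^ (3/4 : ℝ)⌋₊ : ℝ) + 1 := Nat.lt_floor_add_one _
      _ ≤ (2:ℝ) ^ (K+1) := by
          have := Nat.lt_pow_succ_log_self (by norm_num : 1 < 2) ⌊x ^ (3/4 : ℝ)⌋₊
          exact_mod_cast Nat.succ_le_of_lt this
  have hpow2pos : ∀ k : ℕ, (0:ℝ) < 2 ^ k := fun k => by positivity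
  have hdiv14 : x / x ^ (3/4 : ℝ) = x ^ (1/4 : ℝ) := by
    rw [eq_comm, eq_div_iff (ne_of_gt hx34pos), ← Real.rpow_add hxpos]
    norm_num
  -- lower bound on x / 2^k for k ≤ K
  have hlow : ∀ k : ℕ, k ≤ K → x ^ (1/4 : ℝ) ≤ x / 2 ^ k := by
    intro k hk
    calc x ^ (1/4 : ℝ) = x / x ^ (3/4 : ℝ) := hdiv14.symm
      _ ≤ x / 2 ^ K := by
          apply div_le_div_of_nonneg_left hxpos.le (hpow2pos K) h2K
      _ ≤ x / 2 ^ k := by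
          apply div_le_div_of_nonneg_left hxpos.le (hpow2pos k)
          exact pow_le_pow_right₀ (by norm_num) hk
  have hhigh : x / 2 ^ K ≤ 2 * x ^ (1/4 : ℝ) := by
    have h : x ^ (3/4 : ℝ) / 2 < 2 ^ K := by
      rw [div_lt_iff₀ (by norm_num : (0:ℝ) < 2)]
      calc x ^ (3/4:ℝ) < (2:ℝ)^(K+1) := h2K'
        _ = 2 ^ K * 2 := by ring
    calc x / 2 ^ K ≤ x / (x ^ (3/4 : ℝ) / 2) :=
          div_le_div_of_nonneg_left hxpos.le (by positivity) h.le
      _ = 2 * (x / x ^ (3/4 : ℝ)) := by ring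
      _ = 2 * x ^ (1/4 : ℝ) := by rw [hdiv14]
  -- the M-difference bound
  have hMdiff : ∀ k : ℕ, k < K →
      M (x / 2 ^ k) - M (x / 2 ^ (k+1)) ≤ Real.log 2 + 2 * B := by
    intro k hk
    have h1 : x₀ ≤ x / 2 ^ k := hx₀le.trans (hlow k hk.le)
    have h2 : x₀ ≤ x / 2 ^ (k+1) := hx₀le.trans (hlow (k+1) hk)
    have e1 := abs_le.mp (hx₀ _ h1)
    have e2 := abs_le.mp (hx₀ _ h2)
    have hlogs : Real.log (x / 2 ^ k) - Real.log (x / 2 ^ (k+1)) = Real.log 2 := by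
      rw [Real.log_div (ne_of_gt hxpos) (ne_of_gt (hpow2pos k)),
        Real.log_div (ne_of_gt hxpos) (ne_of_gt (hpow2pos (k+1))),
        Real.log_pow, Real.log_pow]
      push_cast; ring
    linarith [e1.1, e1.2, e2.1, e2.2]
  -- pointwise sqrt bound pieces
  have hpiece : ∀ k : ℕ, k < K →
      S (x / 2 ^ k) - S (x / 2 ^ (k+1)) ≤
        (Real.sqrt (4 * x / Real.log x) * (Real.sqrt (1/2)) ^ k) * (Real.log 2 + 2 * B) := by
    intro k hk
    set ck : ℝ := Real.sqrt (4 * x / Real.log x) * (Real.sqrt (1/2)) ^ k with hckdef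
    have hck0 : 0 ≤ ck := by positivity
    have hckval : ck = Real.sqrt ((x / 2 ^ k) / ((1/4) * Real.log x)) := by
      rw [hckdef, ← sqrt_pow_nonneg (by norm_num : (0:ℝ) ≤ 1/2),
        ← Real.sqrt_mul (by positivity)]
      congr 1
      field_simp
      ring_nf
      rw [← mul_pow]; norm_num
    have hb0 : (0:ℝ) ≤ x / 2 ^ (k+1) := by positivity
    have hba : x / 2 ^ (k+1) ≤ x / 2 ^ k :=
      div_le_div_of_nonneg_left hxpos.le (hpow2pos k) (by
        exact pow_le_pow_right₀ (by norm_num) (by omega : k ≤ k+1))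
    have hstep := S_sub_le hb0 hba hck0 (fun p hp hbp hpa => by
      have hp2 : (2:ℝ) ≤ (p:ℝ) := by exact_mod_cast hp.two_le
      have hppos : (0:ℝ) < p := by linarith
      have hx14p : x ^ (1/4 : ℝ) < (p:ℝ) := lt_of_le_of_lt (hlow (k+1) hk) hbp
      have hlogp : (1/4) * Real.log x ≤ Real.log p := by
        have := Real.log_le_log (by positivity) hx14p.le
        rwa [Real.log_rpow hxpos] at this
      have hlogppos : (0:ℝ) < Real.log p := Real.log_pos (by linarith)
      rw [hckval]
      apply Real.sqrt_le_sqrt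
      exact div_le_div₀ (by positivity) hpa (by positivity) hlogp)
    calc S (x / 2 ^ k) - S (x / 2 ^ (k+1)) ≤ ck * (M (x / 2 ^ k) - M (x / 2 ^ (k+1))) := hstep
      _ ≤ ck * (Real.log 2 + 2 * B) := by
          apply mul_le_mul_of_nonneg_left (hMdiff k hk) hck0
  -- telescoping
  have tele : S x - S (x / 2 ^ K) =
      ∑ k ∈ Finset.range K, (S (x / 2 ^ k) - S (x / 2 ^ (k+1))) := by
    rw [Finset.sum_range_sub' (fun k => S (x / 2 ^ k)) K]
    simp
  -- sqrt(4x/L) = 2 sqrt(x/L)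
  have hsqrt4 : Real.sqrt (4 * x / Real.log x) = 2 * Real.sqrt (x / Real.log x) := by
    rw [show 4 * x / Real.log x = 4 * (x / Real.log x) by ring,
      Real.sqrt_mul (by norm_num : (0:ℝ) ≤ 4),
      show Real.sqrt 4 = 2 by
        rw [show (4:ℝ) = 2^2 by norm_num, Real.sqrt_sq (by norm_num : (0:ℝ) ≤ 2)]]
  -- dyadic total
  have hdyadic : S x - S (x / 2 ^ K) ≤
      8 * (Real.log 2 + 2 * B) * Real.sqrt (x / Real.log x) := by
    rw [tele]
    calc ∑ k ∈ Finset.range K, (S (x / 2 ^ k) - S (x / 2 ^ (k+1)))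
        ≤ ∑ k ∈ Finset.range K,
            (Real.sqrt (4 * x / Real.log x) * (Real.sqrt (1/2)) ^ k) * (Real.log 2 + 2 * B) :=
          Finset.sum_le_sum fun k hk => hpiece k (Finset.mem_range.mp hk)
      _ = Real.sqrt (4 * x / Real.log x) * (Real.log 2 + 2 * B) *
            ∑ k ∈ Finset.range K, (Real.sqrt (1/2)) ^ k := by
          rw [Finset.mul_sum]; congr 1; ext k; ring
      _ ≤ Real.sqrt (4 * x / Real.log x) * (Real.log 2 + 2 * B) * 4 := by
          apply mul_le_mul_of_nonneg_left (geo_bound K) (by positivity)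
      _ = 8 * (Real.log 2 + 2 * B) * Real.sqrt (x / Real.log x) := by
          rw [hsqrt4]; ring
  -- tail bound
  have htail : S (x / 2 ^ K) ≤ Real.sqrt (x / Real.log x) := by
    have hy0 : (0:ℝ) ≤ x / 2 ^ K := by positivity
    have hcard : S (x / 2 ^ K) ≤ ((primesUpTo (x / 2 ^ K)).card : ℝ) := by
      rw [S]
      calc ∑ p ∈ primesUpTo (x / 2 ^ K), Real.sqrt (Real.log p / p)
          ≤ ∑ _p ∈ primesUpTo (x / 2 ^ K), (1:ℝ) := by
            apply Finset.sum_le_sum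
            intro p hp
            have hprime := ((mem_primesUpTo hy0).mp hp).2
            have hppos : (0:ℝ) < p := by exact_mod_cast hprime.pos
            rw [Real.sqrt_le_one]
            rw [div_le_one hppos]
            exact Real.log_le_self hppos.le
        _ = ((primesUpTo (x / 2 ^ K)).card : ℝ) := by simp
    have hcard2 : ((primesUpTo (x / 2 ^ K)).card : ℝ) ≤ x / 2 ^ K + 1 := by
      calc ((primesUpTo (x / 2 ^ K)).card : ℝ)
          ≤ ((Finset.range (⌊x / 2 ^ K⌋₊ + 1)).card : ℝ) := by
            exact_mod_cast Finset.card_le_card (Finset.filter_subset _ _)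
        _ = (⌊x / 2 ^ K⌋₊ : ℝ) + 1 := by simp
        _ ≤ x / 2 ^ K + 1 := by linarith [Nat.floor_le hy0]
    have h3 : x / 2 ^ K + 1 ≤ 3 * x ^ (1/4 : ℝ) := by linarith [hhigh, hx14_1]
    have hfinal : 3 * x ^ (1/4 : ℝ) ≤ Real.sqrt (x / Real.log x) := by
      rw [show Real.sqrt (x / Real.log x) = (x / Real.log x) ^ (1/2 : ℝ) from
        Real.sqrt_eq_rpow _]
      have key : (3 * x ^ (1/4 : ℝ))^2 ≤ x / Real.log x := by
        have e : (3 * x ^ (1/4 : ℝ))^2 = 9 * x ^ (1/2 : ℝ) := by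
          rw [mul_pow, ← Real.rpow_natCast (x ^ (1/4:ℝ)) 2, ← Real.rpow_mul hxpos.le]
          norm_num
        rw [e, le_div_iff₀ hLpos]
        calc 9 * x ^ (1/2:ℝ) * Real.log x = x ^ (1/2:ℝ) * (9 * Real.log x) := by ring
          _ ≤ x ^ (1/2:ℝ) * x ^ (1/2:ℝ) :=
              mul_le_mul_of_nonneg_left h9log hx12pos.le
          _ = x := by rw [← Real.rpow_add hxpos]; norm_num
      calc 3 * x ^ (1/4 : ℝ) = ((3 * x ^ (1/4:ℝ))^2) ^ (1/2 : ℝ) := by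
            rw [← Real.rpow_natCast (3 * x ^ (1/4:ℝ)) 2, ← Real.rpow_mul (by positivity)]
            norm_num
        _ ≤ (x / Real.log x) ^ (1/2 : ℝ) :=
            Real.rpow_le_rpow (by positivity) key (by norm_num)
    linarith
  linarith [hdyadic, htail]
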